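/- For α = 1 (so 𝒩_1(N) = (2 ∑_{j=1}^{⌊N/2⌋} 1/j)^{−1}) and every fixed t ∈ ℝ, the product P_{N,1}(t) = ∏_{j=1}^{⌊N/2⌋} cos²(2 𝒩_1(N) t / j) converges to 1 as N → ∞. -/

import Mathlib

/-- Kac normalization `𝒩_α(N) = (2 ∑_{j=1}^{⌊N/2⌋} j^{−α})⁻¹`. -/
noncomputable def kacNorm (α : ℝ) (N : ℕ) : ℝ :=
  (2 * ∑ j ∈ Finset.Icc 1 (N / 2), (j : ℝ) ^ (-α))⁻¹

/-- The relaxation product `P_{N,α}(t) = ∏_{j=1}^{⌊N/2⌋} cos²(2 𝒩_α(N) t j^{−α})`. -/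
noncomputable def relaxProd (α : ℝ) (N : ℕ) (t : ℝ) : ℝ :=
  ∏ j ∈ Finset.Icc 1 (N / 2), Real.cos (2 * kacNorm α N * t * (j : ℝ) ^ (-α)) ^ 2

/-- Weierstrass product inequality: `1 - ∑ a i ≤ ∏ (1 - a i)` for `a i ∈ [0,1]`. -/
lemma weierstrass {s : Finset ℕ} {a : ℕ → ℝ} (h0 : ∀ i ∈ s, 0 ≤ a i)
    (h1 : ∀ i ∈ s, a i ≤ 1) : 1 - ∑ i ∈ s, a i ≤ ∏ i ∈ s, (1 - a i) := by
  classical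
  induction s using Finset.induction_on with
  | empty => simp
  | @insert x s hx ih =>
    rw [Finset.sum_insert hx, Finset.prod_insert hx]
    have h0' : ∀ i ∈ s, 0 ≤ a i := fun i hi => h0 i (Finset.mem_insert_of_mem hi)
    have h1' : ∀ i ∈ s, a i ≤ 1 := fun i hi => h1 i (Finset.mem_insert_of_mem hi)
    have key := ih h0' h1'
    have hax0 := h0 x (Finset.mem_insert_self x s)
    have hax1 := h1 x (Finset.mem_insert_self x s)
    have hsum0 : 0 ≤ ∑ i ∈ s, a i := Finset.sum_nonneg h0'
    nlinarith [mul_le_mul_of_nonneg_left key (by linarith : (0:ℝ) ≤ 1 - a x)]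

lemma harmonic_tendsto :
    Filter.Tendsto (fun N : ℕ => ∑ j ∈ Finset.Icc 1 (N / 2), (j : ℝ)⁻¹)
      Filter.atTop Filter.atTop := by
  have h1 : Filter.Tendsto (fun m : ℕ => ∑ j ∈ Finset.Icc 1 m, (j : ℝ)⁻¹)
      Filter.atTop Filter.atTop := by
    have := Real.tendsto_sum_range_one_div_nat_succ_atTop
    refine this.congr fun m => ?_
    rw [show Finset.Icc 1 m = Finset.Ico 1 (m + 1) by rfl, Finset.sum_Ico_eq_sum_range]
    simp [add_comm, one_div]
  have h2 : Filter.Tendsto (fun N : ℕ => N / 2) Filter.atTop Filter.atTop := by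
    apply Filter.tendsto_atTop_atTop.2
    exact fun b => ⟨2 * b, fun n hn => (Nat.le_div_iff_mul_le two_pos).2 (by omega)⟩
  exact h1.comp h2

/-- for `α = 1` and every fixed `t`, `P_{N,1}(t) → 1` as `N → ∞`. -/
theorem stmt_4 (t : ℝ) :
    Filter.Tendsto (fun N : ℕ => relaxProd 1 N t) Filter.atTop (nhds 1) := by
  set H : ℕ → ℝ := fun N => ∑ j ∈ Finset.Icc 1 (N / 2), (j : ℝ)⁻¹ with hHdef
  have hrpow : ∀ N : ℕ, ∀ j ∈ Finset.Icc 1 (N / 2), (j : ℝ) ^ (-(1:ℝ)) = (j : ℝ)⁻¹ := by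
    intro N j _
    rw [Real.rpow_neg_one]
  have hkac : ∀ N : ℕ, kacNorm 1 N = (2 * H N)⁻¹ := by
    intro N
    rw [kacNorm, Finset.sum_congr rfl (hrpow N)]
  -- lower bound eventually
  have hlow : ∀ᶠ N : ℕ in Filter.atTop, 1 - t ^ 2 / H N ≤ relaxProd 1 N t := by
    filter_upwards [Filter.eventually_ge_atTop 2] with N hN
    have hm : 1 ≤ N / 2 := by omega
    have hH1 : (1 : ℝ) ≤ H N := by
      calc (1:ℝ) = ∑ j ∈ Finset.Icc (1:ℕ) 1, (j : ℝ)⁻¹ := by simp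
        _ ≤ H N := Finset.sum_le_sum_of_subset_of_nonneg
            (Finset.Icc_subset_Icc_right hm) (fun j _ _ => by positivity)
    have hHpos : 0 < H N := lt_of_lt_of_le one_pos hH1
    rw [relaxProd, Finset.prod_congr rfl fun j hj => by rw [hrpow N j hj]]
    -- each factor: cos² x = 1 - sin² x ≥ 1 - x²
    set a : ℕ → ℝ := fun j => Real.sin (2 * kacNorm 1 N * t * (j : ℝ)⁻¹) ^ 2 with hadef
    have hprod : ∀ j ∈ Finset.Icc 1 (N / 2),
        Real.cos (2 * kacNorm 1 N * t * (j : ℝ)⁻¹) ^ 2 = 1 - a j := by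
      intro j _
      rw [hadef]
      linarith [Real.sin_sq_add_cos_sq (2 * kacNorm 1 N * t * (j : ℝ)⁻¹)]
    rw [Finset.prod_congr rfl hprod]
    have h0 : ∀ j ∈ Finset.Icc 1 (N / 2), 0 ≤ a j := fun j _ => sq_nonneg _
    have h1 : ∀ j ∈ Finset.Icc 1 (N / 2), a j ≤ 1 := fun j _ =>
      (sq_le_one_iff_abs_le_one _).2 (abs_le.2 ⟨Real.neg_one_le_sin _, Real.sin_le_one _⟩)
    refine le_trans ?_ (weierstrass h0 h1)
    have hsum : ∑ j ∈ Finset.Icc 1 (N / 2), a j ≤ t ^ 2 / H N := by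
      have hterm : ∀ j ∈ Finset.Icc 1 (N / 2),
          a j ≤ t ^ 2 / H N ^ 2 * (j : ℝ)⁻¹ := by
        intro j hj
        have hj1 : 1 ≤ j := (Finset.mem_Icc.mp hj).1
        have hjpos : (0:ℝ) < j := by exact_mod_cast hj1
        have hsin : a j ≤ (2 * kacNorm 1 N * t * (j : ℝ)⁻¹) ^ 2 := by
          rw [hadef]
          have := Real.sin_sq_le_sq (x := 2 * kacNorm 1 N * t * (j : ℝ)⁻¹)
          exact this
        refine hsin.trans ?_
        rw [hkac N]
        have hjsq : (j : ℝ)⁻¹ ^ 2 ≤ (j : ℝ)⁻¹ := by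
          rw [sq]
          nth_rewrite 3 [show (j:ℝ)⁻¹ = 1 * (j:ℝ)⁻¹ by ring]
          apply mul_le_mul_of_nonneg_right _ (by positivity)
          rw [inv_le_one_iff₀]
          right; exact_mod_cast hj1
        have hexp : (2 * (2 * H N)⁻¹ * t * (j : ℝ)⁻¹) ^ 2
            = t ^ 2 / H N ^ 2 * (j : ℝ)⁻¹ ^ 2 := by
          field_simp
        rw [hexp]
        exact mul_le_mul_of_nonneg_left hjsq (by positivity)
      calc ∑ j ∈ Finset.Icc 1 (N / 2), a j
          ≤ ∑ j ∈ Finset.Icc 1 (N / 2), t ^ 2 / H N ^ 2 * (j : ℝ)⁻¹ :=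
            Finset.sum_le_sum hterm
        _ = t ^ 2 / H N ^ 2 * H N := by rw [← Finset.mul_sum]
        _ = t ^ 2 / H N := by field_simp
    linarith
  have hup : ∀ N : ℕ, relaxProd 1 N t ≤ 1 := by
    intro N
    apply Finset.prod_le_one (fun j _ => sq_nonneg _)
    intro j _
    exact (sq_le_one_iff_abs_le_one _).2
      (abs_le.2 ⟨Real.neg_one_le_cos _, Real.cos_le_one _⟩)
  have hg : Filter.Tendsto (fun N : ℕ => 1 - t ^ 2 / H N) Filter.atTop (nhds 1) := by
    have : Filter.Tendsto (fun N : ℕ => t ^ 2 / H N) Filter.atTop (nhds 0) :=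
      Filter.Tendsto.div_atTop tendsto_const_nhds harmonic_tendsto
    simpa using (tendsto_const_nhds.sub this)
  exact tendsto_of_tendsto_of_tendsto_of_le_of_le' hg tendsto_const_nhds hlow
    (Filter.Eventually.of_forall hup)
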